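/- Fix α ∈ (0,1), let a be a scaling function, and let x ≥ 0. Then lim_{θ→∞} (a(θ)/θ) · log(1 − F_θ((θ/a(θ))x + β(α,θ))) = −x. -/

import Mathlib

open MeasureTheory Filter Set

/-- `c_α = α / Γ(1-α)`. -/
noncomputable def cAlpha (α : ℝ) : ℝ := α / Real.Gamma (1 - α)

/-- `β(α,θ) = log θ - (α+1) log log θ - log Γ(1-α)`. -/
noncomputable def betaShift (α θ : ℝ) : ℝ :=
  Real.log θ - (α + 1) * Real.log (Real.log θ) - Real.log (Real.Gamma (1 - α))

/-- The distribution function of the largest jump `V₁(T)`: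
`F_θ(s) = (1 + c_α s^{-α} ∫_1^∞ z^{-(1+α)} e^{-sz} dz)^{-θ/α}` for `s > 0`, and `0` for `s ≤ 0`. -/
noncomputable def Fdist (α θ s : ℝ) : ℝ :=
  if 0 < s then
    (1 + cAlpha α * s ^ (-α) *
        ∫ z in Set.Ioi (1:ℝ), z ^ (-(1 + α)) * Real.exp (-(s * z))) ^ (-(θ / α))
  else 0

section MDPaux

open Real

private lemma integrand_integrable (α s : ℝ) (hα : 0 < α) (hs : 0 < s) :
    IntegrableOn (fun z : ℝ => z ^ (-(1 + α)) * Real.exp (-(s * z))) (Ioi 1) := by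
  have hexp : IntegrableOn (fun z : ℝ => Real.exp (-s * z)) (Ioi 1) :=
    exp_neg_integrableOn_Ioi 1 hs
  refine hexp.mono' ?_ ?_
  · refine (ContinuousOn.mul ?_ (Continuous.continuousOn (by continuity))).aestronglyMeasurable
      measurableSet_Ioi
    exact fun z hz => (Real.continuousAt_rpow_const z _ (Or.inl (ne_of_gt (lt_trans one_pos hz)))).continuousWithinAt
  · filter_upwards [ae_restrict_mem measurableSet_Ioi] with z hz
    have hz1 : (1:ℝ) ≤ z := le_of_lt hz
    have h1 : z ^ (-(1 + α)) ≤ 1 :=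
      Real.rpow_le_one_of_one_le_of_nonpos hz1 (by linarith)
    have h0 : 0 ≤ z ^ (-(1 + α)) := Real.rpow_nonneg (by linarith) _
    rw [Real.norm_eq_abs, abs_of_nonneg (by positivity)]
    calc z ^ (-(1 + α)) * Real.exp (-(s * z)) ≤ 1 * Real.exp (-(s * z)) := by
          apply mul_le_mul_of_nonneg_right h1 (Real.exp_nonneg _)
      _ = Real.exp (-s * z) := by rw [one_mul, neg_mul]


private lemma exp_int_Ioi (s : ℝ) (hs : 0 < s) :
    (∫ z in Ioi (1:ℝ), Real.exp (-(s * z))) = Real.exp (-s) / s := by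
  have := MeasureTheory.integral_comp_mul_left_Ioi (fun u => Real.exp (-u)) 1 hs
  simp only [mul_one] at this
  rw [show (fun z : ℝ => Real.exp (-(s * z))) = (fun z => Real.exp (-(s * z))) from rfl]
  calc (∫ z in Ioi (1:ℝ), Real.exp (-(s * z))) = s⁻¹ • ∫ u in Ioi s, Real.exp (-u) := this
    _ = Real.exp (-s) / s := by rw [integral_exp_neg_Ioi]; rw [smul_eq_mul]; ring


private lemma I_upper (α s : ℝ) (hα : 0 < α) (hs : 0 < s) :
    (∫ z in Ioi (1:ℝ), z ^ (-(1 + α)) * Real.exp (-(s * z))) ≤ Real.exp (-s) / s := by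
  rw [← exp_int_Ioi s hs]
  refine setIntegral_mono_on (integrand_integrable α s hα hs)
    (exp_neg_integrableOn_Ioi 1 hs |>.congr_fun (fun z _ => by simp only [neg_mul]) measurableSet_Ioi)
    measurableSet_Ioi ?_
  intro z hz
  have hz1 : (1:ℝ) ≤ z := le_of_lt hz
  calc z ^ (-(1 + α)) * Real.exp (-(s * z)) ≤ 1 * Real.exp (-(s * z)) :=
        mul_le_mul_of_nonneg_right
          (Real.rpow_le_one_of_one_le_of_nonpos hz1 (by linarith)) (Real.exp_nonneg _)
    _ = Real.exp (-(s * z)) := one_mul _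


private lemma exp_int_Ioc (s : ℝ) (hs : 0 < s) :
    (∫ z in Ioc (1:ℝ) 2, Real.exp (-(s * z))) = (Real.exp (-s) - Real.exp (-(2*s))) / s := by
  rw [← intervalIntegral.integral_of_le (by norm_num : (1:ℝ) ≤ 2)]
  have h := intervalIntegral.integral_comp_mul_left (fun u => Real.exp (-u)) (ne_of_gt hs)
    (a := 1) (b := 2)
  simp only [mul_one] at h
  rw [h, intervalIntegral.integral_comp_neg (fun u => Real.exp u), integral_exp]
  rw [smul_eq_mul]
  ring_nf


private lemma I_lower (α s : ℝ) (hα : 0 < α) (hs : 0 < s) :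
    (2:ℝ) ^ (-(1 + α)) * ((Real.exp (-s) - Real.exp (-(2*s))) / s)
      ≤ ∫ z in Ioi (1:ℝ), z ^ (-(1 + α)) * Real.exp (-(s * z)) := by
  have hsub : (Ioc (1:ℝ) 2) ⊆ Ioi 1 := Ioc_subset_Ioi_self
  have hint := integrand_integrable α s hα hs
  have h1 : (∫ z in Ioc (1:ℝ) 2, z ^ (-(1 + α)) * Real.exp (-(s * z)))
      ≤ ∫ z in Ioi (1:ℝ), z ^ (-(1 + α)) * Real.exp (-(s * z)) := by
    refine setIntegral_mono_set hint ?_ (HasSubset.Subset.eventuallyLE hsub)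
    filter_upwards [ae_restrict_mem measurableSet_Ioi] with z hz
    have : (0:ℝ) < z := lt_trans one_pos hz
    positivity
  refine le_trans ?_ h1
  rw [← exp_int_Ioc s hs, ← integral_const_mul]
  refine setIntegral_mono_on
    ((exp_neg_integrableOn_Ioi 1 hs |>.congr_fun (fun z _ => by simp only [neg_mul])
        measurableSet_Ioi).mono_set hsub |>.const_mul _)
    (hint.mono_set hsub) measurableSet_Ioc ?_
  intro z hz
  have hz1 : (1:ℝ) < z := hz.1
  have hz2 : z ≤ 2 := hz.2
  have : z ^ (-(1 + α)) ≥ (2:ℝ) ^ (-(1 + α)) :=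
    Real.rpow_le_rpow_of_nonpos (lt_trans one_pos hz1) hz2 (by linarith)
  exact mul_le_mul_of_nonneg_right this (Real.exp_nonneg _)


set_option maxHeartbeats 1000000 in
private lemma key (α θ aθ x : ℝ) (hα : α ∈ Set.Ioo (0:ℝ) 1) (hθ : 0 < θ) (haθ : 0 < aθ)
    (hx : 0 ≤ x) (hL : 2 ≤ Real.log θ)
    (hβ1 : Real.log θ / 2 ≤ betaShift α θ) (hβ2 : betaShift α θ ≤ Real.log θ)
    (hE1 : cAlpha α * Real.exp (-(θ / aθ * x + betaShift α θ)) ≤ 1/2)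
    (hE2 : Real.exp (-(θ / aθ * x + betaShift α θ)) ≤ 1/2) :
    -x - (α+1) * (x / Real.log θ) - aθ/θ * ((3+α) * Real.log 2 + (2:ℝ)^(α+1))
      ≤ aθ/θ * Real.log (1 - Fdist α θ (θ / aθ * x + betaShift α θ))
    ∧ aθ/θ * Real.log (1 - Fdist α θ (θ / aθ * x + betaShift α θ))
      ≤ -x + (α+1) * Real.log 2 * (aθ/θ) := by
  obtain ⟨hα0, hα1⟩ := hα
  have hΓ : 0 < Real.Gamma (1 - α) := Real.Gamma_pos_of_pos (by linarith)
  have hc : 0 < cAlpha α := div_pos hα0 hΓ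
  set L := Real.log θ with hLdef
  have hL0 : 0 < L := by linarith
  set w := θ / aθ * x with hwdef
  have hw : 0 ≤ w := by positivity
  set s := w + betaShift α θ with hsdef
  have hsL : L / 2 ≤ s := by simp only [hsdef]; linarith
  have hs1 : (1:ℝ) ≤ s := by linarith
  have hs0 : (0:ℝ) < s := by linarith
  have hsub : s ≤ w + L := by simp only [hsdef]; linarith
  set b := aθ / θ with hbdef
  have hb0 : 0 < b := by positivity
  have hbw : b * w = x := by rw [hwdef, hbdef]; field_simp
  set r := L / s with hrdef
  have hr0 : 0 < r := by positivity
  have hr2 : r ≤ 2 := by rw [hrdef, div_le_iff₀ hs0]; linarith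
  -- integral bounds
  set I := ∫ z in Ioi (1:ℝ), z ^ (-(1 + α)) * Real.exp (-(s * z)) with hIdef
  have hIub : I ≤ Real.exp (-s) / s := I_upper α s hα0 hs0
  have hIlb : (2:ℝ) ^ (-(1 + α)) * ((Real.exp (-s) - Real.exp (-(2*s))) / s) ≤ I :=
    I_lower α s hα0 hs0
  have hesub : Real.exp (-(2*s)) ≤ Real.exp (-s) / 2 := by
    calc Real.exp (-(2*s)) = Real.exp (-s) * Real.exp (-s) := by
          rw [← Real.exp_add]; ring_nf
      _ ≤ Real.exp (-s) * (1/2) := by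
          apply mul_le_mul_of_nonneg_left hE2 (Real.exp_nonneg _)
      _ = Real.exp (-s) / 2 := by ring
  have h2pow : (0:ℝ) < (2:ℝ) ^ (-(1+α)) := Real.rpow_pos_of_pos two_pos _
  have hIlb' : (2:ℝ) ^ (-(1+α)) * (Real.exp (-s) / (2*s)) ≤ I := by
    refine le_trans ?_ hIlb
    have h1 : Real.exp (-s) / (2*s) ≤ (Real.exp (-s) - Real.exp (-(2*s))) / s := by
      rw [div_le_div_iff₀ (by positivity) hs0]
      have hsub2 : Real.exp (-s)/2 ≤ Real.exp (-s) - Real.exp (-(2*s)) := by linarith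
      have h1a := mul_le_mul_of_nonneg_right hsub2 (by positivity : (0:ℝ) ≤ 2*s)
      calc Real.exp (-s) * s = Real.exp (-s)/2 * (2*s) := by ring
        _ ≤ (Real.exp (-s) - Real.exp (-(2*s))) * (2*s) := h1a
    exact mul_le_mul_of_nonneg_left h1 h2pow.le
  have hIpos : 0 < I := lt_of_lt_of_le (by positivity) hIlb'
  set G := cAlpha α * s ^ (-α) * I with hGdef
  have hspow : (0:ℝ) < s ^ (-α) := Real.rpow_pos_of_pos hs0 _
  have hGpos : 0 < G := by positivity
  have hspow1 : s ^ (-α) ≤ 1 := Real.rpow_le_one_of_one_le_of_nonpos hs1 (by linarith)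
  have hGub0 : G ≤ cAlpha α * s ^ (-α) * (Real.exp (-s) / s) :=
    mul_le_mul_of_nonneg_left hIub (by positivity)
  have hGhalf : G ≤ 1/2 := by
    refine le_trans hGub0 (le_trans ?_ hE1)
    have h1 : Real.exp (-s) / s ≤ Real.exp (-s) := div_le_self (Real.exp_nonneg _) hs1
    have h2 : s ^ (-α) * (Real.exp (-s) / s) ≤ 1 * Real.exp (-s) :=
      mul_le_mul hspow1 h1 (by positivity) zero_le_one
    calc cAlpha α * s ^ (-α) * (Real.exp (-s) / s)
        = cAlpha α * (s ^ (-α) * (Real.exp (-s) / s)) := by ring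
      _ ≤ cAlpha α * (1 * Real.exp (-s)) := mul_le_mul_of_nonneg_left h2 hc.le
      _ = cAlpha α * Real.exp (-(w + betaShift α θ)) := by rw [one_mul, hsdef]
  -- Tub identity
  set Tub := r ^ (α+1) * Real.exp (-w) with hTubdef
  have hTubpos : 0 < Tub := by positivity
  have hexpβ : Real.exp (-(betaShift α θ)) = θ⁻¹ * L ^ (α+1) * Real.Gamma (1-α) := by
    rw [betaShift]
    rw [show -(Real.log θ - (α + 1) * Real.log (Real.log θ) - Real.log (Real.Gamma (1 - α)))
        = -Real.log θ + (Real.log (Real.log θ) * (α+1) + Real.log (Real.Gamma (1-α))) by ring]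
    rw [Real.exp_add, Real.exp_add, Real.exp_neg, Real.exp_log hθ, Real.exp_log hΓ,
      ← Real.rpow_def_of_pos hL0]
    ring
  have hTub_eq : θ / α * (cAlpha α * s ^ (-α) * (Real.exp (-s) / s)) = Tub := by
    have hses : Real.exp (-s) = Real.exp (-w) * (θ⁻¹ * L ^ (α+1) * Real.Gamma (1-α)) := by
      rw [hsdef, neg_add, Real.exp_add, hexpβ]
    have hsp : s ^ (-α) / s = (s ^ (α+1))⁻¹ := by
      rw [div_eq_mul_inv, ← Real.rpow_neg_one s, ← Real.rpow_add hs0, ← Real.rpow_neg hs0.le]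
      congr 1; ring
    have hrp : r ^ (α+1) = L ^ (α+1) * (s ^ (α+1))⁻¹ := by
      rw [hrdef, Real.div_rpow hL0.le hs0.le, div_eq_mul_inv]
    rw [hTubdef, hrp, hses, cAlpha]
    have hsp1 : (0:ℝ) < s ^ (α+1) := Real.rpow_pos_of_pos hs0 _
    have hLp1 : (0:ℝ) < L ^ (α+1) := Real.rpow_pos_of_pos hL0 _
    have hkey : s ^ (-α) * s ^ (α+1) = s := by
      rw [← Real.rpow_add hs0, show -α + (α+1) = (1:ℝ) by ring, Real.rpow_one]
    clear_value s
    field_simp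
    linear_combination hkey
  -- bounds on u
  set u := θ / α * Real.log (1 + G) with hudef
  have hθα : 0 < θ / α := by positivity
  have hupos : 0 < u := mul_pos hθα (Real.log_pos (by linarith))
  have hlog1G_ub : Real.log (1 + G) ≤ G := by
    have := Real.log_le_sub_one_of_pos (show (0:ℝ) < 1 + G by linarith)
    linarith
  have hlog1G_lb : G / 2 ≤ Real.log (1 + G) := by
    have h1 := Real.one_sub_inv_le_log_of_pos (show (0:ℝ) < 1 + G by linarith)
    have h2 : G / 2 ≤ 1 - (1 + G)⁻¹ := by
      have he : 1 - (1 + G)⁻¹ = G / (1 + G) := by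
        field_simp; ring
      rw [he, div_le_div_iff₀ (by norm_num) (by linarith)]
      have h2a := mul_le_mul_of_nonneg_left hGhalf hGpos.le
      linarith [h2a]
    linarith
  have hu_ub : u ≤ Tub := by
    calc u ≤ θ / α * G := mul_le_mul_of_nonneg_left hlog1G_ub hθα.le
      _ ≤ θ / α * (cAlpha α * s ^ (-α) * (Real.exp (-s) / s)) :=
          mul_le_mul_of_nonneg_left hGub0 hθα.le
      _ = Tub := hTub_eq
  set K := (2:ℝ) ^ ((3:ℝ)+α) with hKdef
  have hK0 : 0 < K := Real.rpow_pos_of_pos two_pos _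
  have hu_lb : Tub / K ≤ u := by
    have hGlb : cAlpha α * s ^ (-α) * ((2:ℝ) ^ (-(1+α)) * (Real.exp (-s) / (2*s))) ≤ G :=
      mul_le_mul_of_nonneg_left hIlb' (by positivity)
    have hpow : (2:ℝ) ^ (-(1+α)) = 4 / K := by
      have h4 : (2:ℝ) ^ (2:ℝ) = 4 := by
        have h5 := Real.rpow_natCast (2:ℝ) 2
        norm_num at h5; linarith
      rw [hKdef, eq_div_iff hK0.ne', ← Real.rpow_add two_pos,
        show -(1+α) + (3+α) = (2:ℝ) by ring, h4]
    have step : Tub / K ≤ θ / α * (G / 2) := by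
      have h3 : θ / α * (cAlpha α * s ^ (-α) * ((2:ℝ) ^ (-(1+α)) * (Real.exp (-s) / (2*s)))) ≤ θ / α * G :=
        mul_le_mul_of_nonneg_left hGlb hθα.le
      have h4 : θ / α * (cAlpha α * s ^ (-α) * ((2:ℝ) ^ (-(1+α)) * (Real.exp (-s) / (2*s))))
          = 2 * (Tub / K) := by
        rw [hpow, ← hTub_eq]; field_simp; ring
      linarith
    calc Tub / K ≤ θ / α * (G / 2) - 0 := by linarith
      _ ≤ θ / α * Real.log (1 + G) := by
          have := mul_le_mul_of_nonneg_left hlog1G_lb hθα.le; linarith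
  -- F = exp(-u)
  have hF : Fdist α θ s = Real.exp (-u) := by
    rw [Fdist, if_pos hs0, ← hIdef, ← hGdef,
      Real.rpow_def_of_pos (show (0:ℝ) < 1 + G by linarith)]
    congr 1; rw [hudef]; ring
  have hFlt : Real.exp (-u) < 1 := Real.exp_lt_one_iff.mpr (by linarith)
  have h1F : 0 < 1 - Real.exp (-u) := by linarith
  -- log bounds for 1 - exp(-u)
  have hlog_ub : Real.log (1 - Real.exp (-u)) ≤ Real.log u := by
    apply Real.log_le_log h1F
    linarith [Real.add_one_le_exp (-u)]
  have hmul : u * Real.exp (-u) ≤ 1 - Real.exp (-u) := by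
    have h5 : (u+1) * Real.exp (-u) ≤ Real.exp u * Real.exp (-u) :=
      mul_le_mul_of_nonneg_right (Real.add_one_le_exp u) (Real.exp_nonneg _)
    rw [← Real.exp_add] at h5
    simp only [add_neg_cancel, Real.exp_zero] at h5
    linarith [h5]
  have hlog_lb : Real.log u - u ≤ Real.log (1 - Real.exp (-u)) := by
    have h6 : Real.log (u * Real.exp (-u)) ≤ Real.log (1 - Real.exp (-u)) :=
      Real.log_le_log (by positivity) hmul
    rw [Real.log_mul hupos.ne' (Real.exp_ne_zero _), Real.log_exp] at h6
    linarith
  -- log Tub and log r bounds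
  have hlogTub : Real.log Tub = (α+1) * Real.log r - w := by
    rw [hTubdef, Real.log_mul (by positivity) (Real.exp_ne_zero _),
      Real.log_rpow hr0, Real.log_exp]
    ring
  have hlogK : Real.log K = (3+α) * Real.log 2 := Real.log_rpow two_pos _
  have hlogr_ub : Real.log r ≤ Real.log 2 := Real.log_le_log hr0 hr2
  have hlogr_lb : -(w / L) ≤ Real.log r := by
    have h7 : (0:ℝ) < L / (w + L) := by positivity
    have h8 : L / (w + L) ≤ r := by rw [hrdef]; gcongr
    have h9 := Real.log_le_log h7 h8
    have h10 : Real.log (L / (w + L)) = - Real.log ((w + L) / L) := by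
      rw [← Real.log_inv, inv_div]
    have h11 : Real.log ((w + L) / L) ≤ w / L := by
      have h12 := Real.log_le_sub_one_of_pos (show (0:ℝ) < (w + L)/L by positivity)
      have h13 : (w + L)/L - 1 = w / L := by field_simp; ring
      linarith
    linarith
  -- u ≤ 2^(α+1)
  have hTub2 : Tub ≤ (2:ℝ) ^ (α+1) := by
    calc Tub ≤ r ^ (α+1) * 1 := by
          apply mul_le_mul_of_nonneg_left (Real.exp_le_one_iff.mpr (by linarith))
            (by positivity)
      _ = r ^ (α+1) := mul_one _
      _ ≤ (2:ℝ) ^ (α+1) := Real.rpow_le_rpow hr0.le hr2 (by linarith)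
  have hu2 : u ≤ (2:ℝ) ^ (α+1) := le_trans hu_ub hTub2
  -- log u bounds
  have hlogu_ub : Real.log u ≤ (α+1) * Real.log r - w :=
    le_trans (Real.log_le_log hupos hu_ub) (le_of_eq hlogTub)
  have hlogu_lb : (α+1) * Real.log r - w - (3+α) * Real.log 2 ≤ Real.log u := by
    have h14 := Real.log_le_log (by positivity : (0:ℝ) < Tub / K) hu_lb
    rw [Real.log_div hTubpos.ne' hK0.ne', hlogTub, hlogK] at h14
    linarith
  -- assemble
  have hgoal : aθ/θ * Real.log (1 - Fdist α θ s) = b * Real.log (1 - Real.exp (-u)) := by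
    rw [hF, hbdef]
  constructor
  · rw [hgoal]
    have hlow : (α+1) * Real.log r - w - (3+α) * Real.log 2 - (2:ℝ)^(α+1)
        ≤ Real.log (1 - Real.exp (-u)) := by linarith
    have hmul1 : b * ((α+1) * Real.log r - w - (3+α) * Real.log 2 - (2:ℝ)^(α+1))
        ≤ b * Real.log (1 - Real.exp (-u)) := mul_le_mul_of_nonneg_left hlow hb0.le
    have hrr : -((α+1) * (x / L)) ≤ b * ((α+1) * Real.log r) := by
      have h15 : b * (α+1) * (-(w/L)) ≤ b * (α+1) * Real.log r :=
        mul_le_mul_of_nonneg_left hlogr_lb (by positivity)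
      have h16 : b * (α+1) * (-(w/L)) = -((α+1) * (x / L)) := by
        rw [← hbw]; ring
      linarith
    have hexpand : b * ((α+1) * Real.log r - w - (3+α) * Real.log 2 - (2:ℝ)^(α+1))
        = b * ((α+1) * Real.log r) - x - b * ((3+α) * Real.log 2 + (2:ℝ)^(α+1)) := by
      rw [← hbw]; ring
    linarith
  · rw [hgoal]
    have hup : Real.log (1 - Real.exp (-u)) ≤ (α+1) * Real.log r - w := by linarith
    have hmul2 : b * Real.log (1 - Real.exp (-u)) ≤ b * ((α+1) * Real.log r - w) :=
      mul_le_mul_of_nonneg_left hup hb0.le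
    have h17 : b * ((α+1) * Real.log r) ≤ b * ((α+1) * Real.log 2) :=
      mul_le_mul_of_nonneg_left (mul_le_mul_of_nonneg_left hlogr_ub (by linarith)) hb0.le
    have h18 : b * ((α+1) * Real.log r - w) = b * ((α+1) * Real.log r) - x := by
      rw [← hbw]; ring
    linarith

end MDPaux

/-- For `α ∈ (0,1)`, a scaling function `a` (`a(θ) → ∞`, `a(θ)/θ → 0`) and `x ≥ 0`,
`lim_{θ→∞} (a(θ)/θ) log (1 - F_θ((θ/a(θ)) x + β(α,θ))) = -x`. -/
theorem mdp_tail_nonneg (α : ℝ) (hα : α ∈ Set.Ioo (0:ℝ) 1)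
    (a : ℝ → ℝ) (hapos : ∀ θ > (0:ℝ), 0 < a θ)
    (ha : Filter.Tendsto a Filter.atTop Filter.atTop)
    (ha' : Filter.Tendsto (fun θ => a θ / θ) Filter.atTop (nhds 0))
    (x : ℝ) (hx : 0 ≤ x) :
    Filter.Tendsto
      (fun θ : ℝ => a θ / θ * Real.log (1 - Fdist α θ (θ / a θ * x + betaShift α θ)))
      Filter.atTop (nhds (-x)) := by
  obtain ⟨hα0, hα1⟩ := hα
  set c := Real.log (Real.Gamma (1 - α)) with hcdef
  -- eventual facts
  have Eθ : ∀ᶠ θ : ℝ in atTop, 0 < θ := eventually_gt_atTop 0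
  have Ea : ∀ᶠ θ : ℝ in atTop, 0 < a θ := Eθ.mono fun θ hθ => hapos θ hθ
  have EL : ∀ᶠ θ : ℝ in atTop, 2 ≤ Real.log θ :=
    Real.tendsto_log_atTop.eventually_ge_atTop 2
  -- betaShift bounds
  have hlittle : (fun y : ℝ => (α+1) * Real.log y + c) =o[atTop] (fun y => y) := by
    have h1 : (fun y : ℝ => Real.log y) =o[atTop] (fun y : ℝ => y) :=
      Real.isLittleO_log_id_atTop
    have h2 : (fun _ : ℝ => c) =o[atTop] (fun y : ℝ => y) :=
      Asymptotics.isLittleO_const_left.2 <| Or.inr tendsto_abs_atTop_atTop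
    exact (h1.const_mul_left (α+1)).add h2
  have Eβ2' : ∀ᶠ y : ℝ in atTop, (α+1) * Real.log y + c ≤ y / 2 := by
    have := hlittle.bound (show (0:ℝ) < 1/2 by norm_num)
    filter_upwards [this, eventually_ge_atTop (0:ℝ)] with y hy hy0
    have : |(α+1) * Real.log y + c| ≤ 1/2 * |y| := hy
    rw [abs_of_nonneg hy0] at this
    calc (α+1) * Real.log y + c ≤ |(α+1) * Real.log y + c| := le_abs_self _
      _ ≤ 1/2 * y := this
      _ = y / 2 := by ring
  have Eβ1' : ∀ᶠ y : ℝ in atTop, 0 ≤ (α+1) * Real.log y + c := by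
    have h3 : Tendsto (fun y : ℝ => (α+1) * Real.log y + c) atTop atTop := by
      apply Filter.tendsto_atTop_add_const_right
      exact Real.tendsto_log_atTop.const_mul_atTop (by linarith)
    exact h3.eventually_ge_atTop 0
  have Eβ : ∀ᶠ θ : ℝ in atTop,
      Real.log θ / 2 ≤ betaShift α θ ∧ betaShift α θ ≤ Real.log θ := by
    filter_upwards [Real.tendsto_log_atTop.eventually Eβ2',
      Real.tendsto_log_atTop.eventually Eβ1'] with θ h1 h2
    constructor
    · rw [betaShift, ← hcdef]
      have : (α+1) * Real.log (Real.log θ) + c ≤ Real.log θ / 2 := h1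
      linarith
    · rw [betaShift, ← hcdef]
      have : 0 ≤ (α+1) * Real.log (Real.log θ) + c := h2
      linarith
  -- s → ∞ and exp bounds
  have hstend : Tendsto (fun θ : ℝ => θ / a θ * x + betaShift α θ) atTop atTop := by
    have h0 : Tendsto (fun θ : ℝ => Real.log θ / 2) atTop atTop := by
      have := Real.tendsto_log_atTop.const_mul_atTop (show (0:ℝ) < 1/2 by norm_num)
      refine this.congr fun θ => by ring
    refine tendsto_atTop_mono' atTop ?_ h0
    filter_upwards [Eθ, Ea, Eβ] with θ hθ haθ hβ
    have hw : 0 ≤ θ / a θ * x := by positivity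
    have h1 := hβ.1
    show Real.log θ / 2 ≤ θ / a θ * x + betaShift α θ
    linarith
  have hexptend : Tendsto (fun θ : ℝ => Real.exp (-(θ / a θ * x + betaShift α θ)))
      atTop (nhds 0) :=
    Real.tendsto_exp_atBot.comp (tendsto_neg_atTop_atBot.comp hstend)
  have EE2 : ∀ᶠ θ : ℝ in atTop, Real.exp (-(θ / a θ * x + betaShift α θ)) ≤ 1/2 :=
    (hexptend.eventually (eventually_le_nhds (by norm_num : (0:ℝ) < 1/2)))
  have EE1 : ∀ᶠ θ : ℝ in atTop,
      cAlpha α * Real.exp (-(θ / a θ * x + betaShift α θ)) ≤ 1/2 :=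
    ((hexptend.const_mul (cAlpha α)).eventually
      (eventually_le_nhds (by norm_num : ((cAlpha α * 0):ℝ) < 1/2)))
  -- squeeze
  set C₁ : ℝ := (3+α) * Real.log 2 + (2:ℝ)^(α+1) with hC1def
  have hxlog : Tendsto (fun θ : ℝ => x / Real.log θ) atTop (nhds 0) := by
    have h5 : Tendsto (fun θ : ℝ => (Real.log θ)⁻¹) atTop (nhds 0) :=
      Real.tendsto_log_atTop.inv_tendsto_atTop
    have h6 := h5.const_mul x
    simpa [div_eq_mul_inv, mul_comm] using h6
  have hlowtend : Tendsto
      (fun θ : ℝ => -x - (α+1) * (x / Real.log θ) - a θ/θ * C₁) atTop (nhds (-x)) := by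
    have := (((tendsto_const_nhds : Tendsto (fun _ : ℝ => -x) atTop (nhds (-x)))).sub
      (hxlog.const_mul (α+1))).sub (ha'.mul_const C₁)
    simpa using this
  have huptend : Tendsto
      (fun θ : ℝ => -x + (α+1) * Real.log 2 * (a θ/θ)) atTop (nhds (-x)) := by
    have := ((tendsto_const_nhds : Tendsto (fun _ : ℝ => -x) atTop (nhds (-x)))).add
      (ha'.const_mul ((α+1) * Real.log 2))
    simpa [mul_assoc] using this
  refine tendsto_of_tendsto_of_tendsto_of_le_of_le' hlowtend huptend ?_ ?_
  · filter_upwards [Eθ, Ea, EL, Eβ, EE1, EE2] with θ hθ haθ hL hβ hE1 hE2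
    exact (key α θ (a θ) x ⟨hα0, hα1⟩ hθ haθ hx hL hβ.1 hβ.2 hE1 hE2).1
  · filter_upwards [Eθ, Ea, EL, Eβ, EE1, EE2] with θ hθ haθ hL hβ hE1 hE2
    exact (key α θ (a θ) x ⟨hα0, hα1⟩ hθ haθ hx hL hβ.1 hβ.2 hE1 hE2).2
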